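/- Let $\alpha\ge 0$ and let $w:[0,\infty)\to\mathbb{R}^m$ satisfy $\frac{dw}{dt}+\alpha w + p(t) = g(t)$ where $p$ is an $\mathbb{R}^m$-valued polynomial and $|g(t)| \le C e^{-\delta t}$ for some $C,\delta>0$. Assume additionally that either $\alpha>0$, or ($\alpha=0$ and $w$ is bounded). Then there exists an $\mathbb{R}^m$-valued polynomial $q$ solving $\frac{dq}{dt}+\alpha q+p(t)=0$ and a constant $\delta'\in(0,\delta]$ such that $|w(t)-q(t)| = O(e^{-\delta' t})$ as $t\to\infty$. -/

import Mathlib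

open Filter Polynomial

/-- Every real polynomial has a polynomial antiderivative. -/
lemma exists_antideriv (P : ℝ[X]) : ∃ Q : ℝ[X], derivative Q = P := by
  induction P using Polynomial.induction_on' with
  | add p q hp hq =>
    obtain ⟨Qp, hQp⟩ := hp; obtain ⟨Qq, hQq⟩ := hq
    exact ⟨Qp + Qq, by simp [hQp, hQq]⟩
  | monomial n a =>
    refine ⟨C (a / (n + 1)) * X ^ (n + 1), ?_⟩
    rw [derivative_C_mul_X_pow]
    simp only [Nat.add_sub_cancel]
    rw [Nat.cast_add, Nat.cast_one, div_mul_cancel₀ _ (by positivity : (n:ℝ) + 1 ≠ 0)]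
    exact C_mul_X_pow_eq_monomial

/-- For `α ≠ 0`, the ODE `Q' + α Q + P = 0` has a polynomial solution. -/
lemma exists_poly_sol {α : ℝ} (hα : α ≠ 0) (P : ℝ[X]) :
    ∃ Q : ℝ[X], derivative Q + C α * Q + P = 0 := by
  suffices h : ∀ n (P : ℝ[X]), P.natDegree ≤ n → ∃ Q, derivative Q + C α * Q + P = 0 from
    h P.natDegree P le_rfl
  intro n
  induction n with
  | zero =>
    intro P hP
    refine ⟨C (-(α⁻¹ * P.coeff 0)), ?_⟩
    rw [eq_C_of_natDegree_le_zero hP]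
    simp only [derivative_C, zero_add, ← C_mul, ← C_add]
    rw [← C_0]
    congr 1
    field_simp
    simp
  | succ n ih =>
    intro P hP
    obtain ⟨R, hR⟩ := ih (C (-α⁻¹) * derivative P)
      ((natDegree_C_mul_le _ _).trans ((natDegree_derivative_le P).trans (by omega)))
    refine ⟨C (-α⁻¹) * P + R, ?_⟩
    have hc : C α * C (-α⁻¹) = -1 := by
      rw [← C_mul, mul_neg, mul_inv_cancel₀ hα]; simp
    rw [derivative_add, derivative_C_mul]
    linear_combination hR + P * hc

/-- Fencing helper: bound the norm of a function by a barrier on `[a, ∞)`. -/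
lemma fence_helper {E : Type*} [NormedAddCommGroup E] [NormedSpace ℝ E] {f f' : ℝ → E}
    {B B' : ℝ → ℝ} {a : ℝ}
    (hd : ∀ t, a ≤ t → HasDerivAt f (f' t) t)
    (hB : ∀ x, HasDerivAt B (B' x) x)
    (ha : ‖f a‖ ≤ B a)
    (bound : ∀ t, a ≤ t → ‖f' t‖ ≤ B' t) :
    ∀ t, a ≤ t → ‖f t‖ ≤ B t := by
  intro t ht
  exact image_norm_le_of_norm_deriv_right_le_deriv_boundary
    (fun x hx => (hd x hx.1).continuousAt.continuousWithinAt)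
    (fun x hx => (hd x hx.1).hasDerivWithinAt) ha hB
    (fun x hx => bound x hx.1) (Set.mem_Icc.2 ⟨ht, le_rfl⟩)

/-- A vector-valued function is polynomial if each component is given by a real polynomial. -/
def IsPolyVec {m : ℕ} (f : ℝ → (Fin m → ℝ)) : Prop :=
  ∀ i, ∃ P : Polynomial ℝ, ∀ t, f t i = P.eval t

theorem stmt_2 (m : ℕ) (α δ C : ℝ) (hα : 0 ≤ α) (hδ : 0 < δ)
    (w p g : ℝ → (Fin m → ℝ)) (hp : IsPolyVec p)
    (hw : ∀ t, 0 ≤ t → HasDerivAt w (g t - α • w t - p t) t)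
    (hg : ∀ t, 0 ≤ t → ‖g t‖ ≤ C * Real.exp (-δ * t))
    (hcase : 0 < α ∨ (α = 0 ∧ ∃ M, ∀ t, 0 ≤ t → ‖w t‖ ≤ M)) :
    ∃ q : ℝ → (Fin m → ℝ), IsPolyVec q ∧
      (∀ t, HasDerivAt q (-(α • q t) - p t) t) ∧
      ∃ δ' ∈ Set.Ioc (0 : ℝ) δ, ∃ C' : ℝ,
        ∀ t, 0 ≤ t → ‖w t - q t‖ ≤ C' * Real.exp (-δ' * t) := by
  have hC0 : 0 ≤ C := by
    have h := (norm_nonneg (g 0)).trans (hg 0 le_rfl)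
    simpa using h
  choose P hP using hp
  have hQex : ∀ i : Fin m, ∃ Q : ℝ[X], derivative Q + Polynomial.C α * Q + P i = 0 := by
    intro i
    rcases eq_or_lt_of_le hα with h0 | h0
    · obtain ⟨Q, hQ⟩ := exists_antideriv (-(P i))
      exact ⟨Q, by rw [← h0]; simp [hQ]⟩
    · exact exists_poly_sol (ne_of_gt h0) (P i)
  choose Q hQ using hQex
  set q : ℝ → (Fin m → ℝ) := fun t i => (Q i).eval t with hq_def
  have hqpoly : IsPolyVec q := fun i => ⟨Q i, fun t => rfl⟩
  have hqeval : ∀ t i, (derivative (Q i)).eval t = (-(α • q t) - p t) i := by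
    intro t i
    have h := congrArg (Polynomial.eval t) (hQ i)
    simp only [Polynomial.eval_add, Polynomial.eval_mul, Polynomial.eval_C,
      Polynomial.eval_zero] at h
    have hpt : p t i = (P i).eval t := hP i t
    simp only [Pi.sub_apply, Pi.neg_apply, Pi.smul_apply, smul_eq_mul, hpt, hq_def]
    linarith
  have hqderiv : ∀ qc : Fin m → ℝ, ∀ t,
      HasDerivAt (fun s => q s + qc) (-(α • q t) - p t) t := by
    intro qc t
    rw [hasDerivAt_pi]
    intro i
    have h1 : HasDerivAt (fun s : ℝ => (Q i).eval s + qc i) ((derivative (Q i)).eval t) t :=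
      ((Q i).hasDerivAt t).add_const _
    rw [← hqeval t i]
    exact h1
  set z : ℝ → (Fin m → ℝ) := fun t => w t - q t with hz_def
  have hz : ∀ t, 0 ≤ t → HasDerivAt z (g t - α • z t) t := by
    intro t ht
    have h := (hw t ht).sub (by simpa using hqderiv 0 t)
    refine h.congr_deriv ?_
    ext i
    simp only [hz_def, Pi.sub_apply, Pi.smul_apply, Pi.neg_apply, smul_eq_mul]
    ring
  rcases hcase with h0 | ⟨h0, hM⟩
  · -- case α > 0
    refine ⟨q, hqpoly, (by intro t; simpa using hqderiv 0 t), ?_⟩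
    set δ' := min α δ / 2 with hδ'
    have hδ'pos : 0 < δ' := by positivity
    have hδ'le : δ' ≤ δ := by
      rw [hδ']
      nlinarith [min_le_right α δ]
    have hβ : 0 < α - δ' := by
      have : δ' ≤ α / 2 := by
        rw [hδ']
        nlinarith [min_le_left α δ]
      linarith
    set β := α - δ' with hβdef
    set v : ℝ → (Fin m → ℝ) := fun t => Real.exp (α * t) • z t with hv_def
    have hv : ∀ t, 0 ≤ t → HasDerivAt v (Real.exp (α * t) • g t) t := by
      intro t ht
      have h1 : HasDerivAt (fun s : ℝ => Real.exp (α * s)) (Real.exp (α * t) * α) t := by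
        simpa using ((hasDerivAt_id t).const_mul α).exp
      have h := h1.smul (hz t ht)
      refine h.congr_deriv ?_
      ext i
      simp only [Pi.smul_apply, Pi.add_apply, Pi.sub_apply, smul_eq_mul]
      ring
    set B : ℝ → ℝ := fun t => ‖v 0‖ + (C / β) * (Real.exp (β * t) - 1) with hB_def
    have hB : ∀ x, HasDerivAt B (C * Real.exp (β * x)) x := by
      intro x
      have h1 : HasDerivAt (fun s : ℝ => Real.exp (β * s)) (Real.exp (β * x) * β) x := by
        simpa using ((hasDerivAt_id x).const_mul β).exp
      have h := (hasDerivAt_const x (‖v 0‖)).add ((h1.sub_const 1).const_mul (C / β))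
      refine h.congr_deriv ?_
      field_simp
      ring
    have hbound : ∀ t, 0 ≤ t → ‖Real.exp (α * t) • g t‖ ≤ C * Real.exp (β * t) := by
      intro t ht
      rw [norm_smul, Real.norm_eq_abs, abs_of_pos (Real.exp_pos _)]
      have h1 : Real.exp (α * t) * ‖g t‖ ≤ Real.exp (α * t) * (C * Real.exp (-δ * t)) :=
        mul_le_mul_of_nonneg_left (hg t ht) (Real.exp_pos _).le
      have h2 : Real.exp (α * t) * (C * Real.exp (-δ * t)) ≤ C * Real.exp (β * t) := by
        rw [mul_comm, mul_assoc, ← Real.exp_add]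
        have : Real.exp (-δ * t + α * t) ≤ Real.exp (β * t) := by
          apply Real.exp_le_exp.2
          have : δ' * t ≤ δ * t := mul_le_mul_of_nonneg_right hδ'le ht
          rw [hβdef]; nlinarith
        nlinarith [Real.exp_pos (-δ * t + α * t)]
      linarith
    have hv0 : ‖v 0‖ ≤ B 0 := by simp [hB_def]
    have key := fence_helper hv hB hv0 hbound
    refine ⟨δ', ⟨hδ'pos, hδ'le⟩, ‖v 0‖ + C / β, ?_⟩
    intro t ht
    have hzv : ‖z t‖ = Real.exp (-(α * t)) * ‖v t‖ := by
      rw [hv_def]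
      simp only [norm_smul, Real.norm_eq_abs, abs_of_pos (Real.exp_pos _)]
      rw [← mul_assoc, ← Real.exp_add]
      simp
    have hkey := key t ht
    show ‖z t‖ ≤ _
    rw [hzv]
    have e1 : Real.exp (-(α * t)) ≤ Real.exp (-δ' * t) := by
      apply Real.exp_le_exp.2
      nlinarith
    have e2 : Real.exp (-(α * t)) * Real.exp (β * t) = Real.exp (-δ' * t) := by
      rw [← Real.exp_add]; congr 1; rw [hβdef]; ring
    have hCβ : 0 ≤ C / β := by positivity
    have hv0n : 0 ≤ ‖v 0‖ := norm_nonneg _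
    have hvtn : 0 ≤ ‖v t‖ := norm_nonneg _
    have hexp : 0 < Real.exp (-(α * t)) := Real.exp_pos _
    calc Real.exp (-(α * t)) * ‖v t‖ ≤ Real.exp (-(α * t)) * B t :=
          mul_le_mul_of_nonneg_left hkey hexp.le
      _ ≤ (‖v 0‖ + C / β) * Real.exp (-δ' * t) := by
          rw [hB_def]
          simp only
          nlinarith [mul_le_mul_of_nonneg_left e1 hv0n, Real.exp_pos (β * t)]
  · -- case α = 0
    subst h0
    have hz0 : ∀ t, 0 ≤ t → HasDerivAt z (g t) t := by
      intro t ht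
      have h := hz t ht
      rwa [zero_smul, sub_zero] at h
    have hCδ : 0 ≤ C / δ := by positivity
    have cauchy : ∀ a, 0 ≤ a → ∀ t, a ≤ t →
        ‖z t - z a‖ ≤ C / δ * Real.exp (-δ * a) - C / δ * Real.exp (-δ * t) := by
      intro a ha
      have hB : ∀ x, HasDerivAt
          (fun x => C / δ * Real.exp (-δ * a) - C / δ * Real.exp (-δ * x))
          (C * Real.exp (-δ * x)) x := by
        intro x
        have h1 : HasDerivAt (fun s : ℝ => Real.exp (-δ * s)) (Real.exp (-δ * x) * (-δ)) x := by
          simpa using ((hasDerivAt_id x).const_mul (-δ)).exp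
        have h := (hasDerivAt_const x (C / δ * Real.exp (-δ * a))).sub (h1.const_mul (C / δ))
        refine h.congr_deriv ?_
        field_simp
        ring
      exact fence_helper (f := fun t => z t - z a) (f' := g)
        (fun t ht => (hz0 t (le_trans ha ht)).sub_const _) hB (by simp)
        (fun t ht => hg t (le_trans ha ht))
    have hcs : CauchySeq (fun n : ℕ => z n) := by
      apply cauchySeq_of_le_tendsto_0 (fun N : ℕ => C / δ * Real.exp (-δ * N))
      · intro n m N hn hm
        have main : ∀ a b : ℕ, a ≤ b → N ≤ a →
            dist (z a) (z b) ≤ C / δ * Real.exp (-δ * N) := by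
          intro a b hab hNa
          rw [dist_eq_norm, ← norm_neg, neg_sub]
          have h1 := cauchy a (by positivity) b (by exact_mod_cast hab)
          have h2 : Real.exp (-δ * a) ≤ Real.exp (-δ * N) := by
            apply Real.exp_le_exp.2
            have : (N : ℝ) ≤ a := by exact_mod_cast hNa
            nlinarith
          have h3 : 0 < Real.exp (-δ * b) := Real.exp_pos _
          have := mul_le_mul_of_nonneg_left h2 hCδ
          nlinarith
        rcases le_total n m with h | h
        · exact main n m h hn
        · rw [dist_comm]; exact main m n h hm
      · have hgeo : (fun N : ℕ => C / δ * Real.exp (-δ * N)) =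
            fun N : ℕ => C / δ * Real.exp (-δ) ^ N := by
          funext N
          rw [← Real.exp_nat_mul]
          ring_nf
        rw [hgeo]
        rw [show (0:ℝ) = C / δ * 0 by ring]
        exact (tendsto_pow_atTop_nhds_zero_of_lt_one (Real.exp_pos _).le
          (Real.exp_lt_one_iff.2 (by linarith))).const_mul _
    obtain ⟨L, hL⟩ := cauchySeq_tendsto_of_complete hcs
    refine ⟨fun t => q t + L, ?_, ?_, δ, ⟨hδ, le_rfl⟩, C / δ, ?_⟩
    · intro i
      refine ⟨Q i + Polynomial.C (L i), fun t => ?_⟩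
      simp [hq_def]
    · intro t
      simpa using hqderiv L t
    · intro t ht
      have hwq : w t - (q t + L) = z t - L := by
        ext i
        simp [hz_def]
        ring
      rw [hwq]
      have hseq : Tendsto (fun n : ℕ => ‖z t - z n‖) atTop (nhds ‖z t - L‖) :=
        (tendsto_const_nhds.sub hL).norm
      refine le_of_tendsto hseq ?_
      filter_upwards [eventually_ge_atTop ⌈t⌉₊] with n hn
      have hn' : t ≤ (n : ℝ) := le_trans (Nat.le_ceil t) (by exact_mod_cast hn)
      have h1 := cauchy t ht n hn'
      rw [← norm_neg, neg_sub]
      have h3 : 0 < Real.exp (-δ * n) := Real.exp_pos _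
      nlinarith
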